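/- Let f be a modular form of weight k on SL2(Z) and let T_n be the n-th Hecke operator. Then δ_k(T_n f) = (1/n)·T_n(δ_k f), where on the left T_n acts in weight k and on the right T_n acts in weight k+2. -/

import Mathlib

open UpperHalfPlane Complex Finset
open scoped Manifold

set_option maxHeartbeats 1000000

noncomputable section

/-- Derivative of a function on the upper half-plane. -/
def dz (f : ℍ → ℂ) (τ : ℍ) : ℂ := deriv (f ∘ ofComplex) τ

/-- Iterated derivative. -/
def dzIter : ℕ → (ℍ → ℂ) → (ℍ → ℂ)
  | 0 => id
  | (a + 1) => fun f => dz (dzIter a f)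

/-- The Maass-Shimura operator of weight `k`. -/
def delta (k : ℤ) (f : ℍ → ℂ) : ℍ → ℂ :=
  fun τ => (1 / (2 * Real.pi * Complex.I)) * ((k / (2 * Complex.I * τ.im)) * f τ + dz f τ)

/-- Iterated Maass-Shimura operator `δ_k^{(r)} = δ_{k+2r-2} ∘ ⋯ ∘ δ_k`. -/
def deltaIter (k : ℤ) : ℕ → (ℍ → ℂ) → (ℍ → ℂ)
  | 0 => id
  | (r + 1) => fun f => delta (k + 2 * r) (deltaIter k r f)

/-- The `n`-th Hecke operator in weight `k` (level one). -/
def hecke (k : ℤ) (n : ℕ) (f : ℍ → ℂ) : ℍ → ℂ :=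
  fun τ => (n : ℂ) ^ (k - 1) * ∑ d ∈ n.divisors, (d : ℂ) ^ (-k) *
    ∑ b ∈ Finset.range d, f (ofComplex ((n * τ + b * d) / (d : ℂ) ^ 2))

/-- The Rankin-Cohen bracket of index `j` of forms of weights `k` and `l`. -/
def RC (k l : ℕ) (j : ℕ) (f g : ℍ → ℂ) : ℍ → ℂ :=
  fun τ => (1 / (2 * Real.pi * Complex.I)) ^ j * ∑ a ∈ Finset.range (j + 1),
    (-1 : ℂ) ^ a * ((j + k - 1).choose (j - a)) * ((j + l - 1).choose a) *
      dzIter a f τ * dzIter (j - a) g τ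

/-- The normalized Eisenstein series of weight `k`, via its `q`-expansion. -/
def E (k : ℕ) : ℍ → ℂ :=
  fun τ => 1 - (2 * k / ((bernoulli k : ℚ) : ℂ)) *
    ∑' n : ℕ, (∑ d ∈ (n + 1).divisors, (d : ℂ) ^ (k - 1)) *
      Complex.exp (2 * Real.pi * Complex.I * (n + 1) * τ)

/-- The discriminant cusp form `Δ = q ∏ (1 - qⁿ)²⁴`. -/
def Disc : ℍ → ℂ :=
  fun τ => Complex.exp (2 * Real.pi * Complex.I * τ) *
    ∏' n : ℕ, (1 - Complex.exp (2 * Real.pi * Complex.I * τ) ^ (n + 1)) ^ 24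

lemma im_aux (n d b : ℕ) (τ : ℍ) :
    (((n:ℂ) * τ + b * d) / (d:ℂ)^2).im = n * τ.im / (d:ℝ)^2 := by
  rw [show ((d:ℂ)^2) = (((d:ℝ)^2 : ℝ) : ℂ) by push_cast; ring, Complex.div_ofReal_im]
  simp [Complex.add_im, Complex.mul_im, UpperHalfPlane.coe_im]

lemma im_aux_pos (n d b : ℕ) (hn : 0 < n) (hd : 0 < d) (τ : ℍ) :
    0 < (((n:ℂ) * τ + b * d) / (d:ℂ)^2).im := by
  rw [im_aux]
  have := τ.im_pos
  positivity

lemma diff_aux (f : ℍ → ℂ) (hf : MDifferentiable 𝓘(ℂ) 𝓘(ℂ) f) (w : ℂ) (hw : 0 < w.im) :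
    DifferentiableAt ℂ (f ∘ ofComplex) w := by
  have := (UpperHalfPlane.mdifferentiableAt_iff (f := f) (τ := ofComplex w)).mp (hf _)
  rwa [ofComplex_apply_of_im_pos hw] at this

lemma hasDerivAt_term (f : ℍ → ℂ) (hf : MDifferentiable 𝓘(ℂ) 𝓘(ℂ) f) (n d b : ℕ)
    (hn : 0 < n) (hd : 0 < d) (τ : ℍ) :
    HasDerivAt (fun z : ℂ => (f ∘ ofComplex) (((n:ℂ) * z + b * d) / (d:ℂ)^2))
      ((n:ℂ)/(d:ℂ)^2 * dz f (ofComplex (((n:ℂ) * τ + b * d) / (d:ℂ)^2))) ↑τ := by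
  set w : ℂ := ((n:ℂ) * ↑τ + b * d) / (d:ℂ)^2 with hw_def
  have hw : 0 < w.im := im_aux_pos n d b hn hd τ
  have hD := (diff_aux f hf w hw).hasDerivAt
  have h1 : HasDerivAt (fun z : ℂ => ((n:ℂ) * z + b * d) / (d:ℂ)^2) ((n:ℂ)/(d:ℂ)^2) ↑τ := by
    simpa using (((hasDerivAt_id (τ:ℂ)).const_mul (n:ℂ)).add_const ((b:ℂ)*d)).div_const ((d:ℂ)^2)
  have := hD.comp (τ:ℂ) h1
  have hcoe : ((ofComplex w : ℍ) : ℂ) = w := by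
    rw [ofComplex_apply_of_im_pos hw]
  rw [dz, hcoe]
  simpa [mul_comm, Function.comp_def] using this

lemma dz_hecke (k : ℤ) (n : ℕ) (hn : 0 < n) (f : ℍ → ℂ)
    (hf : MDifferentiable 𝓘(ℂ) 𝓘(ℂ) f) (τ : ℍ) :
    dz (hecke k n f) τ = (n:ℂ)^(k-1) * ∑ d ∈ n.divisors, (d:ℂ)^(-k) *
      ∑ b ∈ Finset.range d, ((n:ℂ)/(d:ℂ)^2) * dz f (ofComplex (((n:ℂ)*τ + b*d)/(d:ℂ)^2)) := by
  have hg : HasDerivAt (fun z : ℂ => (n:ℂ)^(k-1) * ∑ d ∈ n.divisors, (d:ℂ)^(-k) *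
      ∑ b ∈ Finset.range d, (f ∘ ofComplex) (((n:ℂ)*z + b*d)/(d:ℂ)^2))
      ((n:ℂ)^(k-1) * ∑ d ∈ n.divisors, (d:ℂ)^(-k) *
      ∑ b ∈ Finset.range d, ((n:ℂ)/(d:ℂ)^2) * dz f (ofComplex (((n:ℂ)*τ + b*d)/(d:ℂ)^2))) ↑τ := by
    apply HasDerivAt.const_mul
    apply HasDerivAt.fun_sum
    intro d hd
    apply HasDerivAt.const_mul
    apply HasDerivAt.fun_sum
    intro b hb
    exact hasDerivAt_term f hf n d b hn (Nat.pos_of_mem_divisors hd) τ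
  have heq : (hecke k n f ∘ ofComplex) =ᶠ[nhds (τ:ℂ)]
      (fun z : ℂ => (n:ℂ)^(k-1) * ∑ d ∈ n.divisors, (d:ℂ)^(-k) *
        ∑ b ∈ Finset.range d, (f ∘ ofComplex) (((n:ℂ)*z + b*d)/(d:ℂ)^2)) := by
    filter_upwards [(isOpen_lt continuous_const Complex.continuous_im).mem_nhds τ.im_pos]
      with z hz
    simp only [Function.comp_apply, hecke]
    rw [ofComplex_apply_of_im_pos hz]
  rw [dz, heq.deriv_eq, hg.deriv]

theorem delta_hecke_comm' (k : ℤ) (n : ℕ) (hn : 0 < n)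
    (f : ModularForm (CongruenceSubgroup.Gamma 1) k) (τ : ℍ) :
    (1 / (2 * Real.pi * Complex.I)) * ((k / (2 * Complex.I * τ.im)) * hecke k n ⇑f τ
        + dz (hecke k n ⇑f) τ)
      = ((n : ℂ)⁻¹) * ((n : ℂ) ^ (k + 2 - 1) * ∑ d ∈ n.divisors, (d : ℂ) ^ (-(k+2)) *
        ∑ b ∈ Finset.range d, ((1 / (2 * Real.pi * Complex.I)) *
          (((k:ℂ) / (2 * Complex.I * ((ofComplex (((n:ℂ)*τ + b*d)/(d:ℂ)^2)) : ℍ).im))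
            * f (ofComplex (((n:ℂ)*τ + b*d)/(d:ℂ)^2))
          + dz ⇑f (ofComplex (((n:ℂ)*τ + b*d)/(d:ℂ)^2))))) := by
  have hnc : (n:ℂ) ≠ 0 := Nat.cast_ne_zero.mpr hn.ne'
  rw [dz_hecke k n hn ⇑f f.holo' τ]
  simp only [hecke, mul_add, Finset.mul_sum]
  rw [← Finset.sum_add_distrib]
  refine Finset.sum_congr rfl fun d hd => ?_
  rw [← Finset.sum_add_distrib]
  refine Finset.sum_congr rfl fun b hb => ?_
  have hdpos := Nat.pos_of_mem_divisors hd
  have hdc : (d:ℂ) ≠ 0 := Nat.cast_ne_zero.mpr hdpos.ne'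
  have him : (((ofComplex (((n:ℂ)*τ + b*d)/(d:ℂ)^2)) : ℍ).im : ℂ)
      = (n:ℂ) * τ.im / (d:ℂ)^2 := by
    rw [show ((ofComplex (((n:ℂ)*τ + b*d)/(d:ℂ)^2)) : ℍ).im
        = ((((n:ℂ)*τ + b*d)/(d:ℂ)^2)).im by
      rw [ofComplex_apply_of_im_pos (im_aux_pos n d b hn hdpos τ)]; rfl]
    rw [im_aux]
    push_cast
    ring
  rw [him]
  rw [show k + 2 - 1 = (k - 1) + 2 by ring, show -(k+2) = -k + (-2) by ring,
    zpow_add₀ hnc, zpow_add₀ hdc]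
  have hπ : (Real.pi : ℂ) ≠ 0 := Complex.ofReal_ne_zero.mpr Real.pi_ne_zero
  have hI : Complex.I ≠ 0 := Complex.I_ne_zero
  have htim : (τ.im : ℂ) ≠ 0 := Complex.ofReal_ne_zero.mpr τ.im_pos.ne'
  have hdk : (d:ℂ)^k ≠ 0 := zpow_ne_zero _ hdc
  have hnk : (n:ℂ)^(k-1) ≠ 0 := zpow_ne_zero _ hnc
  have h2 : ((n:ℂ))^(2:ℤ) = (n:ℂ)*(n:ℂ) := by rw [zpow_two]
  have h2' : ((d:ℂ))^(-2:ℤ) = ((d:ℂ)*(d:ℂ))⁻¹ := by rw [zpow_neg, zpow_two]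
  rw [h2, h2']
  set F := f (ofComplex (((n:ℂ)*τ + b*d)/(d:ℂ)^2)) with hF
  set G := dz ⇑f (ofComplex (((n:ℂ)*τ + b*d)/(d:ℂ)^2)) with hG
  generalize hN : ((n:ℂ))^(k-1) = N at hnk
  generalize hD : ((d:ℂ))^(-k) = D at *
  congr 1
  · field_simp
  · field_simp


/-- `δ_k` and `T_n` almost commute (base case). -/
theorem delta_hecke_comm (k : ℤ) (hk : Even k) (hk0 : 0 < k) (n : ℕ) (hn : 0 < n)
    (f : ModularForm (CongruenceSubgroup.Gamma 1) k) :
    delta k (hecke k n ⇑f) = ((n : ℂ)⁻¹) • hecke (k + 2) n (delta k ⇑f) := by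
  funext τ
  have h := delta_hecke_comm' k n hn f τ
  simpa only [delta, hecke, Pi.smul_apply, smul_eq_mul] using h

end
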